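/- Let φ, s ∈ ℂ^N (N = 2ⁿ, vectors indexed by y ∈ {0,1}ⁿ) with |φ(y)| = 2^{−n/2} for every y, ‖s‖ = 1, and |⟨φ, s⟩| ≥ √(1/k) for a real k > 0. Then for each j with 0 ≤ j ≤ n, there are at least 2^{n−j}/(4k) strings y'' ∈ {0,1}^{n−j} such that |⟨R_{y''}φ, R_{y''}s⟩| ≥ (1/√(4k))·2^{j−n}. -/

import Mathlib

/-- The Hermitian inner product ⟨u,v⟩ = Σ_y u(y)·conj(v(y)). -/
noncomputable def herm {ι : Type*} [Fintype ι] (u v : ι → ℂ) : ℂ :=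
  ∑ y : ι, u y * (starRingEnd ℂ) (v y)

/-- Identify {0,1}ⁿ with {0,1}ʲ × {0,1}^{n−j}: combine y' ∈ {0,1}ʲ and
y'' ∈ {0,1}^{n−j} into y = y'y'' ∈ {0,1}ⁿ. -/
def combine (n j : ℕ) (hj : j ≤ n) (y' : Fin j → ZMod 2) (y'' : Fin (n - j) → ZMod 2) :
    Fin n → ZMod 2 :=
  fun i => if hij : (i : ℕ) < j then y' ⟨i, hij⟩
    else y'' ⟨(i : ℕ) - j, by have := i.isLt; omega⟩

open Finset

def combineEquiv (n j : ℕ) (hj : j ≤ n) :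
    (Fin j → ZMod 2) × (Fin (n - j) → ZMod 2) ≃ (Fin n → ZMod 2) where
  toFun p := combine n j hj p.1 p.2
  invFun y := (fun i => y ⟨i, lt_of_lt_of_le i.isLt hj⟩,
               fun i => y ⟨j + i, by have := i.isLt; omega⟩)
  left_inv p := by
    obtain ⟨y', y''⟩ := p
    refine Prod.ext ?_ ?_
    · funext i
      simp [combine]
    · funext i
      simp only [combine]
      rw [dif_neg (by omega)]
      congr 1
      ext
      simp
  right_inv y := by
    funext i
    by_cases h : (i : ℕ) < j
    · simp [combine, h]
    · simp only [combine, dif_neg h]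
      congr 1
      ext
      simp
      omega

lemma sum_combine {M : Type*} [AddCommMonoid M] (n j : ℕ) (hj : j ≤ n)
    (f : (Fin n → ZMod 2) → M) :
    ∑ y, f y = ∑ y'' : Fin (n - j) → ZMod 2, ∑ y' : Fin j → ZMod 2,
      f (combine n j hj y' y'') := by
  rw [← Equiv.sum_comp (combineEquiv n j hj) f, Fintype.sum_prod_type_right]
  rfl

/-- Let φ, s ∈ ℂ^N (N = 2ⁿ) with |φ(y)| = 2^{−n/2} for every y, ‖s‖ = 1
(i.e. Σ_y |s(y)|² = 1), and |⟨φ, s⟩| ≥ √(1/k) for a real k > 0.  Then for each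
0 ≤ j ≤ n, there are at least 2^{n−j}/(4k) strings y'' ∈ {0,1}^{n−j} with
|⟨R_{y''}φ, R_{y''}s⟩| ≥ (1/√(4k))·2^{j−n}. -/
theorem stmt_13 (n j : ℕ) (hj : j ≤ n) (k : ℝ) (hk : 0 < k)
    (φ s : (Fin n → ZMod 2) → ℂ)
    (hφ : ∀ y, ‖φ y‖ = (2 : ℝ) ^ (-(n : ℝ) / 2))
    (hs : ∑ y : Fin n → ZMod 2, ‖s y‖ ^ 2 = 1)
    (hheavy : Real.sqrt (1 / k) ≤ ‖herm φ s‖) :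
    (2 : ℝ) ^ ((n : ℝ) - j) / (4 * k) ≤
      (Nat.card {y'' : Fin (n - j) → ZMod 2 //
        (1 / Real.sqrt (4 * k)) * (2 : ℝ) ^ ((j : ℝ) - n) ≤
          ‖herm (fun y' => φ (combine n j hj y' y''))
            (fun y' => s (combine n j hj y' y''))‖} : ℝ) := by
  classical
  have hsk : (0:ℝ) < Real.sqrt k := Real.sqrt_pos.mpr hk
  set t : ℝ := (1 / Real.sqrt (4 * k)) * (2 : ℝ) ^ ((j : ℝ) - n) with ht
  set a : (Fin (n - j) → ZMod 2) → ℝ := fun y'' =>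
    ‖herm (fun y' => φ (combine n j hj y' y''))
      (fun y' => s (combine n j hj y' y''))‖ with ha
  set S : (Fin (n - j) → ZMod 2) → ℝ := fun y'' =>
    ∑ y' : Fin j → ZMod 2, ‖s (combine n j hj y' y'')‖ ^ 2 with hSdef
  have hann : ∀ y'', 0 ≤ a y'' := fun y'' => norm_nonneg _
  have hSnn : ∀ y'', 0 ≤ S y'' := fun y'' =>
    Finset.sum_nonneg fun _ _ => sq_nonneg _
  have hSsum : ∑ y'', S y'' = 1 := by
    rw [← sum_combine n j hj (fun y => ‖s y‖ ^ 2), hs]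
  -- pointwise squared CS bound
  have hcard' : (Fintype.card (Fin j → ZMod 2) : ℝ) = (2:ℝ) ^ (j:ℝ) := by
    simp [Fintype.card_fun]
  have hφsq : ∀ y, ‖φ y‖ ^ 2 = (2:ℝ) ^ (-(n:ℝ)) := by
    intro y
    rw [hφ y, ← Real.rpow_natCast ((2:ℝ) ^ (-(n:ℝ)/2)) 2, ← Real.rpow_mul (by norm_num)]
    norm_num
  have hpt : ∀ y'', a y'' ^ 2 ≤ (2:ℝ) ^ ((j:ℝ) - n) * S y'' := by
    intro y''
    have h1 : a y'' ≤ ∑ y' : Fin j → ZMod 2,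
        ‖φ (combine n j hj y' y'')‖ * ‖s (combine n j hj y' y'')‖ := by
      refine le_trans (norm_sum_le _ _) (le_of_eq ?_)
      refine Finset.sum_congr rfl fun y' _ => ?_
      rw [norm_mul, Complex.norm_conj]
    have h2 := sum_mul_sq_le_sq_mul_sq Finset.univ
      (fun y' => ‖φ (combine n j hj y' y'')‖)
      (fun y' => ‖s (combine n j hj y' y'')‖)
    have h3 : ∑ y' : Fin j → ZMod 2, ‖φ (combine n j hj y' y'')‖ ^ 2
        = (2:ℝ) ^ ((j:ℝ) - n) := by
      simp only [hφsq]
      rw [Finset.sum_const, Finset.card_univ, nsmul_eq_mul, hcard',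
        ← Real.rpow_add (by norm_num)]
      ring_nf
    calc a y'' ^ 2 ≤ (∑ y' : Fin j → ZMod 2,
          ‖φ (combine n j hj y' y'')‖ * ‖s (combine n j hj y' y'')‖) ^ 2 := by
          apply pow_le_pow_left₀ (hann y'') h1
      _ ≤ (2:ℝ) ^ ((j:ℝ) - n) * S y'' := by rw [← h3]; exact h2
  -- sum of a dominates |herm φ s|
  have hsum_a : Real.sqrt (1 / k) ≤ ∑ y'', a y'' := by
    refine le_trans hheavy ?_
    have : herm φ s = ∑ y'' : Fin (n - j) → ZMod 2,
        herm (fun y' => φ (combine n j hj y' y'')) (fun y' => s (combine n j hj y' y'')) := by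
      simpa [herm] using sum_combine n j hj (fun y => φ y * (starRingEnd ℂ) (s y))
    rw [this]
    exact norm_sum_le _ _
  -- heavy set
  set H : Finset (Fin (n - j) → ZMod 2) := Finset.univ.filter (fun y'' => t ≤ a y'') with hH
  have hcardNJ : (Fintype.card (Fin (n - j) → ZMod 2) : ℝ) = (2:ℝ) ^ ((n:ℝ) - j) := by
    simp [Fintype.card_fun]
    rw [← Real.rpow_natCast 2 (n - j)]
    congr 1
    push_cast [Nat.cast_sub hj]
    ring
  have hsqrt4k : Real.sqrt (4 * k) = 2 * Real.sqrt k := by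
    rw [show (4:ℝ) * k = 2^2 * k by ring, Real.sqrt_mul (by positivity), Real.sqrt_sq (by norm_num)]
  have hsqrt1k : Real.sqrt (1 / k) = 1 / Real.sqrt k := by
    rw [one_div, one_div, Real.sqrt_inv]
  -- light part bound
  have hlight : ∑ y'' ∈ Hᶜ, a y'' ≤ (2:ℝ) ^ ((n:ℝ) - j) * t := by
    calc ∑ y'' ∈ Hᶜ, a y'' ≤ ∑ _y'' ∈ Hᶜ, t := by
          refine Finset.sum_le_sum fun y'' hy => ?_
          simp only [hH, Finset.mem_compl, Finset.mem_filter, Finset.mem_univ, true_and] at hy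
          exact (not_le.mp hy).le
      _ = (Hᶜ.card : ℝ) * t := by rw [Finset.sum_const, nsmul_eq_mul]
      _ ≤ (2:ℝ) ^ ((n:ℝ) - j) * t := by
          have h1 : (Hᶜ.card : ℝ) ≤ (2:ℝ) ^ ((n:ℝ) - j) := by
            rw [← hcardNJ]
            exact_mod_cast Nat.cast_le.mpr (Finset.card_le_univ _)
          have ht0 : 0 ≤ t := by positivity
          exact mul_le_mul_of_nonneg_right h1 ht0
  have hpow_t : (2:ℝ) ^ ((n:ℝ) - j) * t = 1 / (2 * Real.sqrt k) := by
    rw [ht, hsqrt4k]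
    rw [show (2:ℝ) ^ ((n:ℝ) - j) * (1 / (2 * Real.sqrt k) * 2 ^ ((j:ℝ) - n))
      = (2:ℝ) ^ ((n:ℝ) - j) * 2 ^ ((j:ℝ) - n) * (1 / (2 * Real.sqrt k)) by ring,
      ← Real.rpow_add (by norm_num)]
    ring_nf
    rw [Real.rpow_zero, one_mul]
  -- heavy part lower bound
  have hheavy_sum : 1 / (2 * Real.sqrt k) ≤ ∑ y'' ∈ H, a y'' := by
    have hsplit : ∑ y'', a y'' = ∑ y'' ∈ H, a y'' + ∑ y'' ∈ Hᶜ, a y'' :=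
      (Finset.sum_add_sum_compl H a).symm
    have : Real.sqrt (1 / k) - (2:ℝ) ^ ((n:ℝ) - j) * t ≤ ∑ y'' ∈ H, a y'' := by
      have := hsum_a
      rw [hsplit] at this
      linarith [hlight]
    rw [hsqrt1k, hpow_t] at this
    calc 1 / (2 * Real.sqrt k) = 1 / Real.sqrt k - 1 / (2 * Real.sqrt k) := by
          field_simp
          ring
      _ ≤ ∑ y'' ∈ H, a y'' := this
  -- Cauchy-Schwarz on heavy set
  have hCS : (∑ y'' ∈ H, a y'') ^ 2 ≤ (H.card : ℝ) * ((2:ℝ) ^ ((j:ℝ) - n)) := by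
    have h1 := sum_mul_sq_le_sq_mul_sq H (fun _ => (1:ℝ)) a
    simp only [one_mul, one_pow] at h1
    rw [Finset.sum_const, nsmul_eq_mul, mul_one] at h1
    refine le_trans h1 ?_
    have h2 : ∑ y'' ∈ H, a y'' ^ 2 ≤ (2:ℝ) ^ ((j:ℝ) - n) := by
      calc ∑ y'' ∈ H, a y'' ^ 2 ≤ ∑ y'' ∈ H, (2:ℝ) ^ ((j:ℝ) - n) * S y'' :=
            Finset.sum_le_sum fun y'' _ => hpt y''
        _ = (2:ℝ) ^ ((j:ℝ) - n) * ∑ y'' ∈ H, S y'' := by rw [Finset.mul_sum]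
        _ ≤ (2:ℝ) ^ ((j:ℝ) - n) * 1 := by
            refine mul_le_mul_of_nonneg_left ?_ (by positivity)
            rw [← hSsum]
            exact Finset.sum_le_sum_of_subset_of_nonneg (Finset.subset_univ H)
              (fun y'' _ _ => hSnn y'')
        _ = (2:ℝ) ^ ((j:ℝ) - n) := mul_one _
    exact mul_le_mul_of_nonneg_left h2 (Nat.cast_nonneg _)
  -- combine
  have hfinal : (2:ℝ) ^ ((n:ℝ) - j) / (4 * k) ≤ (H.card : ℝ) := by
    have hlb : 1 / (4 * k) ≤ (∑ y'' ∈ H, a y'') ^ 2 := by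
      have h0 : 0 ≤ 1 / (2 * Real.sqrt k) := by positivity
      have := pow_le_pow_left₀ h0 hheavy_sum 2
      refine le_trans (le_of_eq ?_) this
      rw [div_pow, one_pow, mul_pow, Real.sq_sqrt hk.le]
      norm_num
    have h3 : 1 / (4 * k) ≤ (H.card : ℝ) * ((2:ℝ) ^ ((j:ℝ) - n)) := le_trans hlb hCS
    have h4 := mul_le_mul_of_nonneg_right h3 (le_of_lt (Real.rpow_pos_of_pos (show (0:ℝ) < 2 by norm_num) ((n:ℝ) - j)))
    calc (2:ℝ) ^ ((n:ℝ) - j) / (4 * k) = 1 / (4 * k) * (2:ℝ) ^ ((n:ℝ) - j) := by ring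
      _ ≤ (H.card : ℝ) * ((2:ℝ) ^ ((j:ℝ) - n)) * (2:ℝ) ^ ((n:ℝ) - j) := h4
      _ = (H.card : ℝ) * ((2:ℝ) ^ (((j:ℝ) - n) + ((n:ℝ) - j))) := by
          rw [mul_assoc, ← Real.rpow_add (by norm_num)]
      _ = (H.card : ℝ) := by norm_num
  refine le_trans hfinal (le_of_eq ?_)
  congr 1
  rw [Nat.card_eq_fintype_card, Fintype.card_subtype]
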